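/- Let φ : R_A → R_B be a graded ring isomorphism that is k-stable, let ℓ := ht(φ(x_{k+1})), assume ℓ > k+1, and assume p := b_{ℓ,ℓ−1} ≠ 0. Then β̄_ℓ = p(y_{ℓ−1} − β̄_{ℓ−1}/2) in H²(B) ⊗ ℚ, where β̄_m := Σ_{j=k+1}^{m−1} b_{m j} y_j for m = ℓ−1, ℓ; equivalently, b_{ℓ j} = −(p/2) b_{ℓ−1, j} for all k+1 ≤ j ≤ ℓ−2. -/

import Mathlib

open MvPolynomial

namespace Bott

/-- A square integer matrix indexed by `Fin n` (rows, columns).  We think of it as the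
matrix `A = (a_{ij})` defining a Bott tower; strict lower triangularity is the
predicate `SLT` below. -/
abbrev Mat (n : ℕ) := Fin n → Fin n → ℤ

/-- `a` is strictly lower triangular: `a i j = 0` unless `j < i`. -/
def SLT {n : ℕ} (a : Mat n) : Prop := ∀ i j : Fin n, a i j ≠ 0 → (j : ℕ) < (i : ℕ)

section Defs

variable (n : ℕ)

/-- The linear form `α_i = ∑_{j<i} a_{ij} x_j` (the terms with `j ≥ i` vanish for a
strictly lower triangular matrix). -/
noncomputable def alpha (a : Mat n) (i : Fin n) : MvPolynomial (Fin n) ℤ :=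
  ∑ j, C (a i j) * X j

/-- The ideal `(x_i² − α_i x_i : 1 ≤ i ≤ n)`. -/
noncomputable def bottIdeal (a : Mat n) : Ideal (MvPolynomial (Fin n) ℤ) :=
  Ideal.span (Set.range fun i : Fin n => X i ^ 2 - alpha n a i * X i)

/-- The Bott ring `R_A = ℤ[x_1,…,x_n]/(x_i² − α_i x_i)`. -/
abbrev BRing (a : Mat n) := MvPolynomial (Fin n) ℤ ⧸ bottIdeal n a

/-- Quotient projection onto the Bott ring. -/
noncomputable def bmk (a : Mat n) : MvPolynomial (Fin n) ℤ →+* BRing n a :=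
  Ideal.Quotient.mk _

/-- The class `x_i` in the Bott ring (0-based: `bx a i` is the paper's `x_{i+1}`). -/
noncomputable def bx (a : Mat n) (i : Fin n) : BRing n a := bmk n a (X i)

/-- The class of `α_i` in the Bott ring. -/
noncomputable def bal (a : Mat n) (i : Fin n) : BRing n a := bmk n a (alpha n a i)

/-- `F_k(A)`: the span of the first `k` degree-2 generators (paper's `x_1, …, x_k`,
0-based indices `< k`). -/
noncomputable def F (a : Mat n) (k : ℕ) : Submodule ℤ (BRing n a) :=
  Submodule.span ℤ (bx n a '' {i : Fin n | (i : ℕ) < k})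

/-- `H²(A)`: the span of all the degree-2 generators. -/
noncomputable def H2 (a : Mat n) : Submodule ℤ (BRing n a) :=
  Submodule.span ℤ (Set.range (bx n a))

/-- `ht(η) = min {k | η ∈ F_k(A)}`. -/
noncomputable def ht (a : Mat n) (η : BRing n a) : ℕ := sInf {k | η ∈ F n a k}

/-- A ring isomorphism between Bott rings is graded iff it preserves the degree-2
components in both directions (both rings are generated in degree 2, so this is
equivalent to preserving the whole grading). -/
def IsGraded (a b : Mat n) (φ : BRing n a ≃+* BRing n b) : Prop :=
  (∀ z ∈ H2 n a, φ z ∈ H2 n b) ∧ (∀ z ∈ H2 n b, φ.symm z ∈ H2 n a)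

/-- `φ` is `k`-stable: `φ(F_k(A)) ⊆ F_k(B)`. -/
def IsStable (a b : Mat n) (k : ℕ) (φ : BRing n a ≃+* BRing n b) : Prop :=
  ∀ z ∈ F n a k, φ z ∈ F n b k

/-! ### Rationalizations -/

/-- The linear form `α_i` with rational coefficients. -/
noncomputable def alphaQ (a : Mat n) (i : Fin n) : MvPolynomial (Fin n) ℚ :=
  ∑ j, C ((a i j : ℚ)) * X j

noncomputable def bottIdealQ (a : Mat n) : Ideal (MvPolynomial (Fin n) ℚ) :=
  Ideal.span (Set.range fun i : Fin n => X i ^ 2 - alphaQ n a i * X i)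

/-- The rationalized Bott ring `R_A ⊗ ℚ`. -/
abbrev BRingQ (a : Mat n) := MvPolynomial (Fin n) ℚ ⧸ bottIdealQ n a

noncomputable def bmkQ (a : Mat n) : MvPolynomial (Fin n) ℚ →+* BRingQ n a :=
  Ideal.Quotient.mk _

noncomputable def bxQ (a : Mat n) (i : Fin n) : BRingQ n a := bmkQ n a (X i)

noncomputable def balQ (a : Mat n) (i : Fin n) : BRingQ n a := bmkQ n a (alphaQ n a i)

/-- `F_k(A) ⊗ ℚ` inside `R_A ⊗ ℚ`. -/
noncomputable def FQ (a : Mat n) (k : ℕ) : Submodule ℚ (BRingQ n a) :=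
  Submodule.span ℚ (bxQ n a '' {i : Fin n | (i : ℕ) < k})

/-- The canonical map `R_A → R_A ⊗ ℚ`. -/
noncomputable def toQ (a : Mat n) : BRing n a →+* BRingQ n a :=
  Ideal.Quotient.lift (bottIdeal n a)
    ((bmkQ n a).comp (MvPolynomial.map (Int.castRingHom ℚ)))
    (by
      intro p hp
      have hmap : ∀ i : Fin n,
          MvPolynomial.map (Int.castRingHom ℚ) (alpha n a i) = alphaQ n a i := by
        intro i
        simp [alpha, alphaQ, map_sum]
      have h : bottIdeal n a ≤
          Ideal.comap (MvPolynomial.map (Int.castRingHom ℚ)) (bottIdealQ n a) := by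
        rw [bottIdeal, Ideal.span_le]
        rintro _ ⟨i, rfl⟩
        simp only [SetLike.mem_coe, Ideal.mem_comap, map_sub, map_mul, map_pow,
          MvPolynomial.map_X, hmap]
        exact Ideal.subset_span ⟨i, rfl⟩
      rw [RingHom.comp_apply]
      exact Ideal.Quotient.eq_zero_iff_mem.mpr (h hp))

/-- The truncated linear form `β̄_ℓ` (rational version): for a 0-based row index `li`,
this is `∑_{k ≤ j < li} b_{li,j} y_j`, i.e. the paper's `β_ℓ` with its terms in
`F_k(B)` removed. -/
noncomputable def bbarQ (b : Mat n) (k : ℕ) (li : Fin n) : BRingQ n b :=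
  ∑ j ∈ Finset.univ.filter (fun j : Fin n => k ≤ (j : ℕ) ∧ j < li),
    (b li j : ℚ) • bxQ n b j

/-- Half of the truncated linear form `β̄_ℓ / 2` (meaningful when all relevant entries
are even), as an element of the integral Bott ring. -/
noncomputable def bbarHalf (b : Mat n) (k : ℕ) (li : Fin n) : BRing n b :=
  ∑ j ∈ Finset.univ.filter (fun j : Fin n => k ≤ (j : ℕ) ∧ j < li),
    (b li j / 2) • bx n b j

/-! ### Switching and twisting -/

/-- The matrix obtained from `b` by exchanging the rows and columns `p` and `q`. -/
def swapMat (b : Mat n) (p q : Fin n) : Mat n :=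
  fun i j => b (Equiv.swap p q i) (Equiv.swap p q j)

/-- `g : R_C → R_{C'}` is a switching isomorphism: for some `j` (0-based `J`) with
`c_{j+1,j} = 0`, `C'` is obtained from `C` by exchanging the `j`-th and `(j+1)`-st rows
and columns, and `g` swaps the `j`-th and `(j+1)`-st generators and fixes the others. -/
def IsSwitch (c c' : Mat n) (g : BRing n c ≃+* BRing n c') : Prop :=
  IsGraded n c c' g ∧
  ∃ (J : ℕ) (hJ : J + 1 < n),
    c ⟨J + 1, hJ⟩ ⟨J, by omega⟩ = 0 ∧
    c' = swapMat n c ⟨J, by omega⟩ ⟨J + 1, hJ⟩ ∧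
    ∀ i, g (bx n c i) = bx n c' (Equiv.swap (⟨J, by omega⟩ : Fin n) ⟨J + 1, hJ⟩ i)

/-- `g : R_C → R_{C'}` is a twisting isomorphism: for some `j` (0-based `J`) and
`v ∈ F_{j−1}(C)` with `v(γ_j − v) = 0`, the rows of `C'` before `j` agree with those of
`C`, `γ'_j = γ_j − 2v`, and `g` is a graded isomorphism fixing the first `j−1`
generators. -/
def IsTwist (c c' : Mat n) (g : BRing n c ≃+* BRing n c') : Prop :=
  IsGraded n c c' g ∧
  ∃ (J : ℕ) (hJ : J < n) (v : BRing n c),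
    v ∈ F n c J ∧ v * (bal n c ⟨J, hJ⟩ - v) = 0 ∧
    (∀ i : Fin n, (i : ℕ) < J → ∀ m, c' i m = c i m) ∧
    ((∑ m, c' ⟨J, hJ⟩ m • bx n c m) = bal n c ⟨J, hJ⟩ - 2 • v) ∧
    (∀ i : Fin n, (i : ℕ) < J → g (bx n c i) = bx n c' i)

/-- `IsMoveComp n c c' g` : `g : R_C → R_{C'}` is a finite (possibly empty) composition
of switching and twisting isomorphisms. -/
inductive IsMoveComp : ∀ c c' : Mat n, (BRing n c ≃+* BRing n c') → Prop
  | refl (c : Mat n) : IsMoveComp c c (RingEquiv.refl _)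
  | switch {c c' c'' : Mat n} {g : BRing n c ≃+* BRing n c'}
      {g' : BRing n c' ≃+* BRing n c''} :
      IsMoveComp c c' g → IsSwitch n c' c'' g' → IsMoveComp c c'' (g.trans g')
  | twist {c c' c'' : Mat n} {g : BRing n c ≃+* BRing n c'}
      {g' : BRing n c' ≃+* BRing n c''} :
      IsMoveComp c c' g → IsTwist n c' c'' g' → IsMoveComp c c'' (g.trans g')

end Defs

/-! ### Block matrices for ℚ-trivial Bott manifolds -/

/-- Starting (0-based) index of the `s`-th block for the partition `lam`. -/
def blockStart (t : ℕ) (lam : Fin t → ℕ) (s : Fin t) : ℕ :=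
  ∑ s' ∈ Finset.univ.filter (fun s' : Fin t => s' < s), lam s'

/-- The block-diagonal matrix with diagonal blocks `H_{λ_1}, …, H_{λ_t}`, where `H_j`
is the `j × j` strictly lower triangular matrix whose first column below the diagonal
consists of `1`s and whose other entries vanish. -/
def blockMat (n t : ℕ) (lam : Fin t → ℕ) : Mat n := fun i j =>
  if ∃ s : Fin t, (j : ℕ) = blockStart t lam s ∧ blockStart t lam s < (i : ℕ) ∧
      (i : ℕ) < blockStart t lam s + lam s then 1 else 0

/-- `H²(ℋ_{λ_s})`: the subgroup of the degree-2 component spanned by the generators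
belonging to the `s`-th block. -/
noncomputable def blockH2 (n t : ℕ) (lam : Fin t → ℕ) (s : Fin t) :
    Submodule ℤ (BRing n (blockMat n t lam)) :=
  Submodule.span ℤ (bx n (blockMat n t lam) ''
    {i : Fin n | blockStart t lam s ≤ (i : ℕ) ∧ (i : ℕ) < blockStart t lam s + lam s})

end Bott

namespace Bott

open TrivSqZeroExt

noncomputable section Aux

/-- The ring `ℚ[ε₁, ε₂]/(ε₁², ε₂²)`, realized as dual numbers over dual numbers. -/
abbrev DD := DualNumber (DualNumber ℚ)

def ee1 : DD := inl DualNumber.eps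
def ee2 : DD := DualNumber.eps

theorem ee1_sq : ee1 * ee1 = 0 := by
  rw [ee1, inl_mul_inl, DualNumber.eps_mul_eps, inl_zero]

theorem ee2_sq : ee2 * ee2 = 0 := DualNumber.eps_mul_eps

theorem eps_eq_inr : (DualNumber.eps : DD) = inr 1 := rfl

theorem ee1_mul_ee2 : ee1 * ee2 = inr (DualNumber.eps) := by
  rw [ee1, ee2, eps_eq_inr, inl_mul_inr, smul_eq_mul, mul_one]

theorem dd_extract (x : ℚ) (h : x • (ee1 * ee2) = 0) : x = 0 := by
  rw [ee1_mul_ee2, ← inr_smul] at h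
  have h2 := congrArg (fun y => TrivSqZeroExt.snd (TrivSqZeroExt.snd y)) h
  simp only [snd_inr, snd_zero, snd_smul] at h2
  have h3 : TrivSqZeroExt.snd (DualNumber.eps : DualNumber ℚ) = 1 := snd_inr _ _
  rw [h3, smul_eq_mul, mul_one] at h2
  exact h2

variable {n : ℕ}

theorem bx_mul_self (a : Mat n) (i : Fin n) :
    bx n a i * bx n a i = bal n a i * bx n a i := by
  have h : bmk n a (X i ^ 2 - alpha n a i * X i) = 0 :=
    Ideal.Quotient.eq_zero_iff_mem.mpr (Ideal.subset_span ⟨i, rfl⟩)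
  rw [map_sub, map_mul, map_pow, sub_eq_zero] at h
  simpa [bx, bal, sq] using h

theorem bal_eq_sum (a : Mat n) (i : Fin n) :
    bal n a i = ∑ j, a i j • bx n a j := by
  rw [bal, alpha, map_sum]
  refine Finset.sum_congr rfl fun j _ => ?_
  rw [← MvPolynomial.smul_eq_C_mul, map_zsmul]
  rfl

theorem F_intro {a : Mat n} {m : ℕ} (c : Fin n → ℤ) (hc : ∀ j : Fin n, m ≤ (j : ℕ) → c j = 0) :
    (∑ j, c j • bx n a j) ∈ F n a m := by
  refine Submodule.sum_mem _ fun j _ => ?_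
  rcases lt_or_ge (j : ℕ) m with h | h
  · exact Submodule.smul_mem _ _ (Submodule.subset_span ⟨j, h, rfl⟩)
  · simp [hc j h]

theorem bal_mem_F (a : Mat n) (ha : SLT a) (i : Fin n) : bal n a i ∈ F n a i := by
  rw [bal_eq_sum]
  refine F_intro _ fun j hj => ?_
  by_contra hne
  exact absurd (ha i j hne) (not_lt.mpr hj)

theorem F_elim {a : Mat n} {m : ℕ} {z : BRing n a} (hz : z ∈ F n a m) :
    ∃ c : Fin n → ℤ, (∀ j : Fin n, m ≤ (j : ℕ) → c j = 0) ∧ z = ∑ j, c j • bx n a j := by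
  rw [F, Finsupp.mem_span_image_iff_linearCombination] at hz
  obtain ⟨lc, hsupp, rfl⟩ := hz
  refine ⟨fun j => lc j, fun j hj => ?_, ?_⟩
  · by_contra hne
    have h2 := hsupp (Finsupp.mem_support_iff.mpr hne)
    simp only [Set.mem_setOf_eq] at h2
    omega
  · rw [Finsupp.linearCombination_apply, Finsupp.sum_fintype]
    intro i
    exact zero_smul _ _

theorem mem_F_top {a : Mat n} {z : BRing n a} (hz : z ∈ H2 n a) : z ∈ F n a n := by
  refine Submodule.span_mono ?_ hz
  rintro _ ⟨i, rfl⟩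
  exact ⟨i, i.isLt, rfl⟩

theorem toQ_bx (a : Mat n) (i : Fin n) : toQ n a (bx n a i) = bxQ n a i := by
  simp [toQ, bx, bxQ, bmk, bmkQ]

/-- The evaluation point used to extract the coefficient of `y_i y_j`. -/
def tmap (b : Mat n) (i j : Fin n) : Fin n → DD := fun m =>
  if m = i then ee1 else if m = j then ee2 + ((b j i : ℚ) / 2) • ee1 else 0

theorem tmap_sum (b : Mat n) (i j : Fin n) (hij : (i : ℕ) < (j : ℕ)) (c : Fin n → ℚ) :
    (∑ m, c m • tmap b i j m)
      = c i • ee1 + c j • (ee2 + ((b j i : ℚ) / 2) • ee1) := by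
  have hne : i ≠ j := fun h => by simp [h] at hij
  rw [← Finset.sum_subset (Finset.subset_univ ({i, j} : Finset (Fin n)))]
  · rw [Finset.sum_pair hne]
    simp [tmap, hne, hne.symm]
  · intro r _ hr
    simp only [Finset.mem_insert, Finset.mem_singleton, not_or] at hr
    simp [tmap, hr.1, hr.2]

end Aux

end Bott
namespace Bott
open TrivSqZeroExt
noncomputable section Aux2
set_option synthInstance.maxHeartbeats 1000000
set_option maxHeartbeats 1000000

instance ddCommRing : CommRing DD := inferInstance
instance ddAlgebra : Algebra ℚ DD := inferInstance

variable {n : ℕ}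

theorem tmap_rel (b : Mat n) (hb : SLT b) (i j : Fin n) (hij : (i : ℕ) < (j : ℕ)) (m : Fin n) :
    (MvPolynomial.eval₂Hom (algebraMap ℚ DD) (tmap b i j)) (X m ^ 2 - alphaQ n b m * X m) = 0 := by
  have heval : ∀ m' : Fin n, (MvPolynomial.eval₂Hom (algebraMap ℚ DD) (tmap b i j)) (alphaQ n b m')
      = (b m' i : ℚ) • ee1 + (b m' j : ℚ) • (ee2 + ((b j i : ℚ) / 2) • ee1) := by
    intro m'
    rw [alphaQ, map_sum, ← tmap_sum b i j hij (fun r => (b m' r : ℚ))]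
    refine Finset.sum_congr rfl fun r _ => ?_
    rw [map_mul, MvPolynomial.eval₂Hom_C, MvPolynomial.eval₂Hom_X', Algebra.smul_def]
  rw [map_sub, map_mul, map_pow, MvPolynomial.eval₂Hom_X', heval]
  have hne : i ≠ j := fun h => by simp [h] at hij
  rcases eq_or_ne m i with rfl | hmi
  · have h1 : b m m = 0 := by
      by_contra h; exact absurd (hb m m h) (lt_irrefl _)
    have h2 : b m j = 0 := by
      by_contra h; have := hb m j h; omega
    simp only [tmap, if_pos rfl, h1, h2, Int.cast_zero, zero_smul, add_zero, zero_add,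
      eq_self_iff_true, if_true]
    simp [pow_two, ee1_sq]
  · rcases eq_or_ne m j with rfl | hmj
    · have h1 : b m m = 0 := by
        by_contra h; exact absurd (hb m m h) (lt_irrefl _)
      simp only [tmap, if_neg hne.symm, if_pos rfl, h1, Int.cast_zero, zero_smul, add_zero, zero_add, sq, eq_self_iff_true, if_true]
      set q : ℚ := (b m i : ℚ) / 2 with hq
      have hq2 : q + q = (b m i : ℚ) := by rw [hq]; ring
      rw [sub_eq_zero]
      have h2 : (ee2 + q • ee1) * ee1 = ee1 * ee2 := by
        rw [add_mul, smul_mul_assoc, ee1_sq, smul_zero, add_zero, mul_comm]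
      have h3 : (ee2 + q • ee1) * (ee2 + q • ee1) = (q + q) • (ee1 * ee2) := by
        rw [mul_add, mul_smul_comm, h2, add_mul, smul_mul_assoc, ee2_sq, zero_add, ← add_smul]
      rw [h3, hq2, smul_mul_assoc, mul_add, mul_smul_comm, ee1_sq, smul_zero, add_zero]
    · simp only [tmap, if_neg hmi, if_neg hmj, sq]
      rw [mul_zero, mul_zero, sub_zero]

def psi (b : Mat n) (hb : SLT b) (i j : Fin n) (hij : (i : ℕ) < (j : ℕ)) :
    BRingQ n b →+* DD :=
  Ideal.Quotient.lift (bottIdealQ n b) (MvPolynomial.eval₂Hom (algebraMap ℚ DD) (tmap b i j))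
    (by
      intro p hp
      have hle : bottIdealQ n b ≤
          RingHom.ker (MvPolynomial.eval₂Hom (algebraMap ℚ DD) (tmap b i j)) := by
        rw [bottIdealQ, Ideal.span_le]
        rintro _ ⟨m, rfl⟩
        exact tmap_rel b hb i j hij m
      exact hle hp)

theorem psi_bxQ (b : Mat n) (hb : SLT b) (i j : Fin n) (hij : (i : ℕ) < (j : ℕ)) (m : Fin n) :
    psi b hb i j hij (bxQ n b m) = tmap b i j m := by
  simp [psi, bxQ, bmkQ]
  exact (Ideal.Quotient.lift_mk _ _ _).trans (by simp)

theorem psi_algebraMap (b : Mat n) (hb : SLT b) (i j : Fin n) (hij : (i : ℕ) < (j : ℕ)) (x : ℚ) :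
    psi b hb i j hij (algebraMap ℚ (BRingQ n b) x) = algebraMap ℚ DD x := by
  have h : algebraMap ℚ (BRingQ n b) x = bmkQ n b (MvPolynomial.C x) := rfl
  rw [h]
  simp [psi, bmkQ]
  exact (Ideal.Quotient.lift_mk _ _ _).trans (by simp)

theorem key (b : Mat n) (hb : SLT b) (i j : Fin n) (hij : (i : ℕ) < (j : ℕ))
    (c d : Fin n → ℚ) (hd : ∀ m : Fin n, d m ≠ 0 → (m : ℕ) < (i : ℕ))
    (heq : (∑ m, c m • bxQ n b m) * (∑ m, c m • bxQ n b m)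
         = (∑ m, d m • bxQ n b m) * (∑ m, c m • bxQ n b m)) :
    2 * c i * c j + c j ^ 2 * (b j i : ℚ) = 0 := by
  have hpsi := congrArg (psi b hb i j hij) heq
  have hmapsum : ∀ e : Fin n → ℚ, psi b hb i j hij (∑ m, e m • bxQ n b m)
      = ∑ m, e m • tmap b i j m := by
    intro e
    rw [map_sum]
    refine Finset.sum_congr rfl fun m _ => ?_
    rw [map_rat_smul (psi b hb i j hij) (e m) (bxQ n b m), psi_bxQ]
  rw [map_mul, map_mul, hmapsum c, hmapsum d, tmap_sum b i j hij c] at hpsi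
  have hdzero : (∑ m, d m • tmap b i j m) = 0 := by
    refine Finset.sum_eq_zero fun m _ => ?_
    rcases eq_or_ne (d m) 0 with h | h
    · rw [h, zero_smul]
    · have hlt := hd m h
      have h1 : m ≠ i := fun hh => by subst hh; omega
      have h2 : m ≠ j := fun hh => by subst hh; omega
      simp [tmap, h1, h2]
  rw [hdzero, zero_mul] at hpsi
  set q : ℚ := (b j i : ℚ) / 2 with hq
  have hcomm : ee2 * ee1 = ee1 * ee2 := mul_comm _ _
  have expand : (c i • ee1 + c j • (ee2 + q • ee1)) * (c i • ee1 + c j • (ee2 + q • ee1))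
      = (2 * c i * c j + c j ^ 2 * (b j i : ℚ)) • (ee1 * ee2) := by
    have hb2 : (b j i : ℚ) = q + q := by rw [hq]; ring
    simp only [mul_add, add_mul, smul_mul_assoc, mul_smul_comm, smul_smul, ee1_sq, ee2_sq,
      hcomm, smul_zero, add_zero, zero_add, hb2]
    module
  rw [expand] at hpsi
  exact dd_extract _ hpsi

end Aux2
end Bott
namespace Bott

set_option maxHeartbeats 1000000 in
set_option synthInstance.maxHeartbeats 400000 in
/-- Let `φ : R_A → R_B` be a `k`-stable graded ring isomorphism,
`ℓ := ht(φ(x_{k+1})) > k + 1`, and assume `p := b_{ℓ,ℓ−1} ≠ 0`.  Then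
`β̄_ℓ = p(y_{ℓ−1} − β̄_{ℓ−1}/2)` in `H²(B) ⊗ ℚ`, where
`β̄_m = ∑_{j=k+1}^{m−1} b_{mj} y_j`. -/
theorem stmt_11 (n k : ℕ) (hk : k < n) (a b : Mat n) (ha : SLT a) (hb : SLT b)
    (φ : BRing n a ≃+* BRing n b) (hφ : IsGraded n a b φ) (hst : IsStable n a b k φ)
    (l : ℕ) (hl : l = ht n b (φ (bx n a ⟨k, hk⟩))) (hlk : k + 1 < l) (hln : l ≤ n)
    (hp : b ⟨l - 1, by omega⟩ ⟨l - 2, by omega⟩ ≠ 0) :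
    bbarQ n b k ⟨l - 1, by omega⟩ =
      (b ⟨l - 1, by omega⟩ ⟨l - 2, by omega⟩ : ℚ) •
        (bxQ n b ⟨l - 2, by omega⟩ - (2 : ℚ)⁻¹ • bbarQ n b k ⟨l - 2, by omega⟩) := by
  have hln1 : l - 1 < n := by omega
  have hln2 : l - 2 < n := by omega
  set L1 : Fin n := ⟨l - 1, hln1⟩ with hL1def
  set L2 : Fin n := ⟨l - 2, hln2⟩ with hL2def
  set z := φ (bx n a ⟨k, hk⟩) with hz
  have hzH2 : z ∈ H2 n b := hφ.1 _ (Submodule.subset_span (Set.mem_range_self _))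
  have hL1v : (L1 : ℕ) = l - 1 := rfl
  have hL2v : (L2 : ℕ) = l - 2 := rfl
  have hzl : z ∈ F n b l := by
    have h1 : z ∈ F n b (ht n b z) := by
      rw [ht]
      exact Nat.sInf_mem ⟨n, show n ∈ {m | z ∈ F n b m} from mem_F_top hzH2⟩
    rw [← hl] at h1
    exact h1
  have hznot : z ∉ F n b (l - 1) := by
    intro h
    have h2 : ht n b z ≤ l - 1 := Nat.sInf_le (show l - 1 ∈ {m | z ∈ F n b m} from h)
    rw [← hl] at h2
    omega
  obtain ⟨c, hc0, hzc⟩ := F_elim hzl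
  have hcL1 : c L1 ≠ 0 := by
    intro h0
    apply hznot
    rw [hzc]
    refine F_intro _ fun j hj => ?_
    rcases eq_or_lt_of_le hj with he | hlt
    · have hjL : j = L1 := Fin.ext (show (j : ℕ) = l - 1 by omega)
      rw [hjL]; exact h0
    · exact hc0 j (by omega)
  obtain ⟨d, hd0, hwd⟩ := F_elim (hst _ (bal_mem_F a ha ⟨k, hk⟩))
  have hrel : z * z = φ (bal n a ⟨k, hk⟩) * z := by
    rw [hz, ← map_mul, ← map_mul, bx_mul_self]
  have hrelQ : (∑ m, (c m : ℚ) • bxQ n b m) * (∑ m, (c m : ℚ) • bxQ n b m)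
      = (∑ m, (d m : ℚ) • bxQ n b m) * (∑ m, (c m : ℚ) • bxQ n b m) := by
    have h := congrArg (toQ n b) hrel
    rw [map_mul, map_mul, hzc, hwd, map_sum, map_sum] at h
    simpa only [map_zsmul, toQ_bx, Int.cast_smul_eq_zsmul] using h
  have hkey : ∀ i j : Fin n, (i : ℕ) < (j : ℕ) → k ≤ (i : ℕ) →
      2 * (c i : ℚ) * (c j : ℚ) + (c j : ℚ) ^ 2 * (b j i : ℚ) = 0 := by
    intro i j hij hki
    refine key b hb i j hij _ _ (fun m hm => ?_) hrelQ
    have hdm : d m ≠ 0 := fun h => hm (by rw [h, Int.cast_zero])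
    rcases lt_or_ge (m : ℕ) k with h | h
    · omega
    · exact absurd (hd0 m h) hdm
  set p : ℚ := (b L1 L2 : ℚ) with hpdef
  have hp' : p ≠ 0 := by
    rw [hpdef]
    exact_mod_cast hp
  have hc1 : (c L1 : ℚ) ≠ 0 := Int.cast_ne_zero.mpr hcL1
  have hE3 := hkey L2 L1 (by rw [hL1v, hL2v]; omega) (by rw [hL2v]; omega)
  have hc2 : (c L2 : ℚ) = -(c L1 : ℚ) * p / 2 := by
    have h2 : (c L1 : ℚ) * (2 * (c L2 : ℚ) + (c L1 : ℚ) * p) = 0 := by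
      linear_combination hE3
    have h3 := (mul_eq_zero.mp h2).resolve_left hc1
    linarith
  have hc2ne : (c L2 : ℚ) ≠ 0 := by
    rw [hc2]
    intro h
    have h4 : (c L1 : ℚ) * p = 0 := by linarith
    rcases mul_eq_zero.mp h4 with h5 | h5
    · exact hc1 h5
    · exact hp' h5
  have hc2' : (c L2 : ℚ) ≠ 0 := hc2ne
  have hcoef : ∀ j0 : Fin n, k ≤ (j0 : ℕ) → (j0 : ℕ) < l - 2 →
      (b L1 j0 : ℚ) = -(p / 2) * (b L2 j0 : ℚ) := by
    intro j0 h1 h2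
    have hE1 := hkey j0 L1 (by rw [hL1v]; omega) h1
    have hE2 := hkey j0 L2 (by rw [hL2v]; omega) h1
    have hB1 : (b L1 j0 : ℚ) = -2 * (c j0 : ℚ) / (c L1 : ℚ) := by
      have ha2 : (c L1 : ℚ) * ((c L1 : ℚ) * (b L1 j0 : ℚ) + 2 * (c j0 : ℚ)) = 0 := by
        linear_combination hE1
      have ha3 := (mul_eq_zero.mp ha2).resolve_left hc1
      rw [eq_div_iff hc1]
      linear_combination ha3
    have hB2 : (b L2 j0 : ℚ) = -2 * (c j0 : ℚ) / (c L2 : ℚ) := by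
      have ha2 : (c L2 : ℚ) * ((c L2 : ℚ) * (b L2 j0 : ℚ) + 2 * (c j0 : ℚ)) = 0 := by
        linear_combination hE2
      have ha3 := (mul_eq_zero.mp ha2).resolve_left hc2ne
      rw [eq_div_iff hc2ne]
      linear_combination ha3
    rw [hB1, hB2, hc2]
    field_simp
  -- the final computation
  unfold bbarQ
  have hfilter : Finset.univ.filter (fun j : Fin n => k ≤ (j : ℕ) ∧ j < L1)
      = insert L2 (Finset.univ.filter (fun j : Fin n => k ≤ (j : ℕ) ∧ j < L2)) := by
    ext m
    simp only [Finset.mem_filter, Finset.mem_insert, Finset.mem_univ, true_and,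
      Fin.lt_def, Fin.ext_iff, hL1v, hL2v]
    omega
  have hL2not : L2 ∉ Finset.univ.filter (fun j : Fin n => k ≤ (j : ℕ) ∧ j < L2) := by
    simp only [Finset.mem_filter, Finset.mem_univ, true_and, Fin.lt_def]
    omega
  rw [hfilter, Finset.sum_insert hL2not, smul_sub, smul_smul, Finset.smul_sum,
    sub_eq_add_neg, ← Finset.sum_neg_distrib]
  congr 1
  refine Finset.sum_congr rfl fun m hm => ?_
  simp only [Finset.mem_filter, Finset.mem_univ, true_and, Fin.lt_def, hL2v] at hm
  rw [hcoef m hm.1 hm.2, smul_smul, ← neg_smul]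
  congr 1
  ring

end Bott
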